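/- Let $F(\boldsymbol{x}) = Q_1(\boldsymbol{x}_1) - Q_2(\boldsymbol{x}_2) - l$ where $Q_1, Q_2$ are integral quadratic forms in $k_1$ and $k_2$ variables respectively, $n = k_1 + k_2$, and $l \in \mathbf{Z}$. For positive integers $q, A_1, A_2$ and fixed residues $\boldsymbol{a}_1 \in (\mathbf{Z}/A_1\mathbf{Z})^{k_1}$, $\boldsymbol{a}_2 \in (\mathbf{Z}/A_2\mathbf{Z})^{k_2}$, $\boldsymbol{c} \in \mathbf{Z}^n$, define $S_q(\boldsymbol{c}) = \sum_{d \bmod q, (d,q)=1} \sum_{\boldsymbol{x}_1 \bmod qA_1, \boldsymbol{x}_1 \equiv \boldsymbol{a}_1 (A_1)} \sum_{\boldsymbol{x}_2 \bmod qA_2, \boldsymbol{x}_2 \equiv \boldsymbol{a}_2 (A_2)} e_q(d F(\boldsymbol{x}) + \boldsymbol{c} \cdot \boldsymbol{x})$ where $e_q(t) = e^{2\pi i t / q}$. If $q = q' q''$, $A_1 = A_1' A_1''$, $A_2 = A_2' A_2''$ with $(A_1' q', A_1'' q'') = (A_2' q', A_2'' q'') = 1$, then $S_q(\boldsymbol{c})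 = S_{q'}(\overline{q''} \boldsymbol{c}) \cdot S_{q''}(\overline{q'} \boldsymbol{c})$, where $\overline{q'} q' \equiv 1 \pmod{q''}$ and $\overline{q''} q'' \equiv 1 \pmod{q'}$. -/

import Mathlib

open Finset

/-- The exponential sum `S_q(c)` of the paper: with `F(x) = Q₁(x₁) - Q₂(x₂) - l`
(the `Qᵢ` given by integer matrices `Mᵢ`),
`S_q(c) = ∑*_{d mod q} ∑_{x₁ mod qA₁, x₁ ≡ a₁ (A₁)} ∑_{x₂ mod qA₂, x₂ ≡ a₂ (A₂)}
   e_q(d F(x) + c·x)`. -/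
noncomputable def expSum (k1 k2 : ℕ) (M1 : Matrix (Fin k1) (Fin k1) ℤ)
    (M2 : Matrix (Fin k2) (Fin k2) ℤ) (l : ℤ) (A1 A2 q : ℕ)
    (a1 : Fin k1 → ℤ) (a2 : Fin k2 → ℤ) (c1 : Fin k1 → ℤ) (c2 : Fin k2 → ℤ) : ℂ :=
  ∑ d ∈ (Finset.range q).filter (fun d => Nat.gcd d q = 1),
    ∑ x1 ∈ (Fintype.piFinset (fun _ : Fin k1 => Finset.range (q * A1))).filter
        (fun x => ∀ i, ((x i : ℤ)) % (A1 : ℤ) = a1 i % (A1 : ℤ)),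
      ∑ x2 ∈ (Fintype.piFinset (fun _ : Fin k2 => Finset.range (q * A2))).filter
          (fun x => ∀ i, ((x i : ℤ)) % (A2 : ℤ) = a2 i % (A2 : ℤ)),
        Complex.exp (2 * Real.pi * Complex.I *
          (((d : ℤ) * ((∑ i, ∑ j, M1 i j * (x1 i : ℤ) * (x1 j : ℤ))
              - (∑ i, ∑ j, M2 i j * (x2 i : ℤ) * (x2 j : ℤ)) - l)
            + (∑ i, c1 i * (x1 i : ℤ)) + (∑ i, c2 i * (x2 i : ℤ)) : ℤ) : ℂ) / (q : ℂ))

lemma coprime_of_mul_mod {r s m : ℕ} (h : (r * s) % m = 1 % m) : Nat.Coprime r m := by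
  have d2 : Nat.gcd r m ∣ m := Nat.gcd_dvd_right _ _
  have d3 : Nat.gcd r m ∣ (r * s) % m :=
    (Nat.dvd_mod_iff d2).mpr ((Nat.gcd_dvd_left r m).mul_right s)
  rw [h] at d3
  have d4 : Nat.gcd r m ∣ 1 % m + m * (1 / m) := Nat.dvd_add d3 (d2.mul_right _)
  rw [Nat.mod_add_div] at d4
  exact Nat.dvd_one.mp d4


lemma exp_congr {q : ℕ} (hq : q ≠ 0) {a b : ℤ} (h : a ≡ b [ZMOD (q : ℤ)]) :
    Complex.exp (2 * Real.pi * Complex.I * (a : ℂ) / (q : ℂ))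
      = Complex.exp (2 * Real.pi * Complex.I * (b : ℂ) / (q : ℂ)) := by
  obtain ⟨k, hk⟩ := h.dvd
  have hb : (b : ℂ) = (a : ℂ) + (q : ℂ) * (k : ℂ) := by
    have : b = a + q * k := by linarith [hk]
    exact_mod_cast congrArg (Int.cast : ℤ → ℂ) this
  have hqC : (q : ℂ) ≠ 0 := Nat.cast_ne_zero.mpr hq
  rw [hb]
  rw [show 2 * Real.pi * Complex.I * ((a : ℂ) + (q : ℂ) * (k : ℂ)) / (q : ℂ)
      = 2 * Real.pi * Complex.I * (a : ℂ) / (q : ℂ) + (k : ℂ) * (2 * Real.pi * Complex.I) by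
    field_simp]
  rw [Complex.exp_add, Complex.exp_int_mul_two_pi_mul_I, mul_one]

lemma exp_mul_combine {q' q'' : ℕ} (hq' : q' ≠ 0) (hq'' : q'' ≠ 0) (u v : ℤ) :
    Complex.exp (2 * Real.pi * Complex.I * (u : ℂ) / (q' : ℂ))
      * Complex.exp (2 * Real.pi * Complex.I * (v : ℂ) / (q'' : ℂ))
      = Complex.exp (2 * Real.pi * Complex.I * ((u * q'' + v * q' : ℤ) : ℂ) / ((q' * q'' : ℕ) : ℂ)) := by
  rw [← Complex.exp_add]
  congr 1
  have h1 : (q' : ℂ) ≠ 0 := Nat.cast_ne_zero.mpr hq'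
  have h2 : (q'' : ℂ) ≠ 0 := Nat.cast_ne_zero.mpr hq''
  push_cast
  field_simp

noncomputable def crt (m n : ℕ) (h : Nat.Coprime m n) (a b : ℕ) : ℕ :=
  (Nat.chineseRemainder h a b : ℕ)

lemma crt_mod_left (m n : ℕ) (h : Nat.Coprime m n) (a b : ℕ) :
    crt m n h a b % m = a % m := (Nat.chineseRemainder h a b).2.1

lemma crt_mod_right (m n : ℕ) (h : Nat.Coprime m n) (a b : ℕ) :
    crt m n h a b % n = b % n := (Nat.chineseRemainder h a b).2.2

lemma crt_lt (m n : ℕ) (h : Nat.Coprime m n) (hm : m ≠ 0) (hn : n ≠ 0) (a b : ℕ) :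
    crt m n h a b < m * n := Nat.chineseRemainder_lt_mul h a b hm hn

lemma crt_unique {m n : ℕ} (h : Nat.Coprime m n) {x y : ℕ}
    (h1 : x % m = y % m) (h2 : x % n = y % n) : x % (m * n) = y % (m * n) :=
  (Nat.modEq_and_modEq_iff_modEq_mul h).mp ⟨h1, h2⟩

lemma crt_mod_full {m n : ℕ} (h : Nat.Coprime m n) (x : ℕ) :
    crt m n h (x % m) (x % n) % (m * n) = x % (m * n) := by
  refine crt_unique h ?_ ?_
  · rw [crt_mod_left, Nat.mod_mod_of_dvd x dvd_rfl]
  · rw [crt_mod_right, Nat.mod_mod_of_dvd x dvd_rfl]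

lemma sum_range_crt {M : Type*} [AddCommMonoid M] {m n : ℕ} (hm : m ≠ 0) (hn : n ≠ 0)
    (h : Nat.Coprime m n) (f : ℕ → M) (hf : ∀ a b, a % (m * n) = b % (m * n) → f a = f b) :
    ∑ x ∈ range (m * n), f x
      = ∑ p ∈ range m ×ˢ range n, f (crt m n h p.1 p.2) := by
  refine Finset.sum_nbij' (fun x => (x % m, x % n)) (fun p => crt m n h p.1 p.2) ?_ ?_ ?_ ?_ ?_
  · intro x hx
    simp only [Finset.mem_product, Finset.mem_range]
    exact ⟨Nat.mod_lt _ (Nat.pos_of_ne_zero hm), Nat.mod_lt _ (Nat.pos_of_ne_zero hn)⟩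
  · intro p hp
    simp only [Finset.mem_range]
    exact crt_lt m n h hm hn p.1 p.2
  · intro x hx
    simp only [Finset.mem_range] at hx
    have e1 := crt_mod_full h x
    have h2 := crt_lt m n h hm hn (x % m) (x % n)
    rw [Nat.mod_eq_of_lt h2, Nat.mod_eq_of_lt hx] at e1
    exact e1
  · intro p hp
    simp only [Finset.mem_product, Finset.mem_range] at hp
    have e1 := crt_mod_left m n h p.1 p.2
    have e2 := crt_mod_right m n h p.1 p.2
    rw [Nat.mod_eq_of_lt hp.1] at e1
    rw [Nat.mod_eq_of_lt hp.2] at e2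
    rw [e1, e2]
  · intro x hx
    exact hf _ _ (crt_mod_full h x).symm

lemma sum_pi_crt {M : Type*} [AddCommMonoid M] {k m n : ℕ} (hm : m ≠ 0) (hn : n ≠ 0)
    (h : Nat.Coprime m n) (f : (Fin k → ℕ) → M)
    (hf : ∀ x y, (∀ i, x i % (m * n) = y i % (m * n)) → f x = f y) :
    ∑ x ∈ Fintype.piFinset (fun _ : Fin k => range (m * n)), f x
      = ∑ p ∈ (Fintype.piFinset (fun _ : Fin k => range m)) ×ˢ
            (Fintype.piFinset (fun _ : Fin k => range n)),
          f (fun i => crt m n h (p.1 i) (p.2 i)) := by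
  refine Finset.sum_nbij' (fun x => (fun i => x i % m, fun i => x i % n))
    (fun p => fun i => crt m n h (p.1 i) (p.2 i)) ?_ ?_ ?_ ?_ ?_
  · intro x hx
    simp only [Finset.mem_product, Fintype.mem_piFinset, Finset.mem_range]
    exact ⟨fun i => Nat.mod_lt _ (Nat.pos_of_ne_zero hm),
      fun i => Nat.mod_lt _ (Nat.pos_of_ne_zero hn)⟩
  · intro p hp
    simp only [Fintype.mem_piFinset, Finset.mem_range]
    exact fun i => crt_lt m n h hm hn _ _
  · intro x hx
    simp only [Fintype.mem_piFinset, Finset.mem_range] at hx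
    funext i
    have e1 := crt_mod_full h (x i)
    have h2 := crt_lt m n h hm hn (x i % m) (x i % n)
    rw [Nat.mod_eq_of_lt h2, Nat.mod_eq_of_lt (hx i)] at e1
    exact e1
  · intro p hp
    simp only [Finset.mem_product, Fintype.mem_piFinset, Finset.mem_range] at hp
    have e1 : ∀ i, crt m n h (p.1 i) (p.2 i) % m = p.1 i := fun i => by
      rw [crt_mod_left, Nat.mod_eq_of_lt (hp.1 i)]
    have e2 : ∀ i, crt m n h (p.1 i) (p.2 i) % n = p.2 i := fun i => by
      rw [crt_mod_right, Nat.mod_eq_of_lt (hp.2 i)]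
    dsimp only
    rw [Prod.ext_iff]
    constructor <;> funext i
    · exact e1 i
    · exact e2 i
  · intro x hx
    exact hf _ _ (fun i => (crt_mod_full h (x i)).symm)

lemma sum_range_unit {M : Type*} [AddCommMonoid M] {m r s : ℕ} (hm : m ≠ 0)
    (hrs : (r * s) % m = 1 % m) (g : ℕ → M) :
    ∑ d ∈ range m, g d = ∑ d ∈ range m, g ((r * d) % m) := by
  have key : ∀ u v d : ℕ, (u * v) % m = 1 % m → d < m → (u * ((v * d) % m)) % m = d := by
    intro u v d huv hd
    have h1 : u * ((v * d) % m) ≡ u * (v * d) [MOD m] :=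
      Nat.ModEq.mul_left u (Nat.mod_modEq (v * d) m)
    have h2 : u * (v * d) = (u * v) * d := by ring
    have h3 : (u * v) * d ≡ 1 * d [MOD m] := Nat.ModEq.mul_right d huv
    have h4 : u * ((v * d) % m) ≡ d [MOD m] := by
      calc u * ((v * d) % m) ≡ u * (v * d) [MOD m] := h1
        _ = (u * v) * d := h2
        _ ≡ 1 * d [MOD m] := h3
        _ = d := one_mul d
    have := h4
    unfold Nat.ModEq at this
    rw [this, Nat.mod_eq_of_lt hd]
  have hsr : (s * r) % m = 1 % m := by rw [Nat.mul_comm]; exact hrs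
  refine Finset.sum_nbij' (fun d => (s * d) % m) (fun d => (r * d) % m) ?_ ?_ ?_ ?_ ?_
  · intro d hd; simp only [Finset.mem_range]; exact Nat.mod_lt _ (Nat.pos_of_ne_zero hm)
  · intro d hd; simp only [Finset.mem_range]; exact Nat.mod_lt _ (Nat.pos_of_ne_zero hm)
  · intro d hd
    simp only [Finset.mem_range] at hd
    exact key r s d hrs hd
  · intro d hd
    simp only [Finset.mem_range] at hd
    exact key s r d hsr hd
  · intro d hd
    simp only [Finset.mem_range] at hd
    rw [key r s d hrs hd]

lemma gcd_congr_mod {a b n : ℕ} (h : a % n = b % n) : Nat.gcd a n = Nat.gcd b n := by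
  rw [Nat.gcd_comm a n, Nat.gcd_comm b n, Nat.gcd_rec n a, Nat.gcd_rec n b, h]

noncomputable def bigL (k1 k2 : ℕ) (M1 : Matrix (Fin k1) (Fin k1) ℤ)
    (M2 : Matrix (Fin k2) (Fin k2) ℤ) (l : ℤ) (q' q'' A1' A1'' A2' A2'' : ℕ)
    (a1 : Fin k1 → ℤ) (a2 : Fin k2 → ℤ) (c1 : Fin k1 → ℤ) (c2 : Fin k2 → ℤ)
    (hqq : Nat.Coprime q' q'') (hB1 : Nat.Coprime (q' * A1') (q'' * A1''))
    (hB2 : Nat.Coprime (q' * A2') (q'' * A2'')) : ℂ :=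
  ∑ d' ∈ range q', ∑ d'' ∈ range q'',
    if Nat.gcd (crt q' q'' hqq d' d'') (q' * q'') = 1 then
      ∑ y1 ∈ Fintype.piFinset (fun _ : Fin k1 => range (q' * A1')),
        ∑ z1 ∈ Fintype.piFinset (fun _ : Fin k1 => range (q'' * A1'')),
          if ∀ i, ((crt (q' * A1') (q'' * A1'') hB1 (y1 i) (z1 i) : ℤ))
              % ((A1' * A1'' : ℕ) : ℤ) = a1 i % ((A1' * A1'' : ℕ) : ℤ) then
            ∑ y2 ∈ Fintype.piFinset (fun _ : Fin k2 => range (q' * A2')),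
              ∑ z2 ∈ Fintype.piFinset (fun _ : Fin k2 => range (q'' * A2'')),
                if ∀ i, ((crt (q' * A2') (q'' * A2'') hB2 (y2 i) (z2 i) : ℤ))
                    % ((A2' * A2'' : ℕ) : ℤ) = a2 i % ((A2' * A2'' : ℕ) : ℤ) then
                  Complex.exp (2 * Real.pi * Complex.I *
                    (((crt q' q'' hqq d' d'' : ℤ) *
                        ((∑ i, ∑ j, M1 i j * (crt (q' * A1') (q'' * A1'') hB1 (y1 i) (z1 i) : ℤ)
                            * (crt (q' * A1') (q'' * A1'') hB1 (y1 j) (z1 j) : ℤ))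
                          - (∑ i, ∑ j, M2 i j * (crt (q' * A2') (q'' * A2'') hB2 (y2 i) (z2 i) : ℤ)
                            * (crt (q' * A2') (q'' * A2'') hB2 (y2 j) (z2 j) : ℤ)) - l)
                      + (∑ i, c1 i * (crt (q' * A1') (q'' * A1'') hB1 (y1 i) (z1 i) : ℤ))
                      + (∑ i, c2 i * (crt (q' * A2') (q'' * A2'') hB2 (y2 i) (z2 i) : ℤ)) : ℤ) : ℂ)
                    / ((q' * q'' : ℕ) : ℂ))
                else 0
          else 0
    else 0

noncomputable def bigR (k1 k2 : ℕ) (M1 : Matrix (Fin k1) (Fin k1) ℤ)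
    (M2 : Matrix (Fin k2) (Fin k2) ℤ) (l : ℤ) (q' q'' A1' A1'' A2' A2'' : ℕ)
    (a1 : Fin k1 → ℤ) (a2 : Fin k2 → ℤ) (c1 : Fin k1 → ℤ) (c2 : Fin k2 → ℤ)
    (qb' qb'' : ℤ) (r' r'' : ℕ) : ℂ :=
  ∑ d' ∈ range q', ∑ d'' ∈ range q'',
    if Nat.gcd (r' * d' % q') q' = 1 then
      if Nat.gcd (r'' * d'' % q'') q'' = 1 then
        ∑ y1 ∈ Fintype.piFinset (fun _ : Fin k1 => range (q' * A1')),
          ∑ z1 ∈ Fintype.piFinset (fun _ : Fin k1 => range (q'' * A1'')),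
            if ∀ i, ((y1 i : ℤ)) % (A1' : ℤ) = a1 i % (A1' : ℤ) then
              if ∀ i, ((z1 i : ℤ)) % (A1'' : ℤ) = a1 i % (A1'' : ℤ) then
                ∑ y2 ∈ Fintype.piFinset (fun _ : Fin k2 => range (q' * A2')),
                  ∑ z2 ∈ Fintype.piFinset (fun _ : Fin k2 => range (q'' * A2'')),
                    if ∀ i, ((y2 i : ℤ)) % (A2' : ℤ) = a2 i % (A2' : ℤ) then
                      if ∀ i, ((z2 i : ℤ)) % (A2'' : ℤ) = a2 i % (A2'' : ℤ) then
                        Complex.exp (2 * Real.pi * Complex.I *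
                          (((r' * d' % q' : ℕ) : ℤ) *
                              ((∑ i, ∑ j, M1 i j * (y1 i : ℤ) * (y1 j : ℤ))
                                - (∑ i, ∑ j, M2 i j * (y2 i : ℤ) * (y2 j : ℤ)) - l)
                            + (∑ i, qb'' * c1 i * (y1 i : ℤ))
                            + (∑ i, qb'' * c2 i * (y2 i : ℤ)) : ℤ) / ((q' : ℕ) : ℂ))
                        * Complex.exp (2 * Real.pi * Complex.I *
                          (((r'' * d'' % q'' : ℕ) : ℤ) *
                              ((∑ i, ∑ j, M1 i j * (z1 i : ℤ) * (z1 j : ℤ))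
                                - (∑ i, ∑ j, M2 i j * (z2 i : ℤ) * (z2 j : ℤ)) - l)
                            + (∑ i, qb' * c1 i * (z1 i : ℤ))
                            + (∑ i, qb' * c2 i * (z2 i : ℤ)) : ℤ) / ((q'' : ℕ) : ℂ))
                      else 0
                    else 0
              else 0
            else 0
      else 0
    else 0

lemma lhs_eq (k1 k2 : ℕ) (M1 : Matrix (Fin k1) (Fin k1) ℤ)
    (M2 : Matrix (Fin k2) (Fin k2) ℤ) (l : ℤ)
    (q' q'' A1' A1'' A2' A2'' : ℕ) (hq' : 0 < q') (hq'' : 0 < q'')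
    (hA1' : 0 < A1') (hA1'' : 0 < A1'') (hA2' : 0 < A2') (hA2'' : 0 < A2'')
    (a1 : Fin k1 → ℤ) (a2 : Fin k2 → ℤ) (c1 : Fin k1 → ℤ) (c2 : Fin k2 → ℤ)
    (hqq : Nat.Coprime q' q'') (hB1 : Nat.Coprime (q' * A1') (q'' * A1''))
    (hB2 : Nat.Coprime (q' * A2') (q'' * A2'')) :
    expSum k1 k2 M1 M2 l (A1' * A1'') (A2' * A2'') (q' * q'') a1 a2 c1 c2
      = bigL k1 k2 M1 M2 l q' q'' A1' A1'' A2' A2'' a1 a2 c1 c2 hqq hB1 hB2 := by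
  unfold expSum bigL
  simp only [Finset.sum_filter]
  simp only [show q' * q'' * (A1' * A1'') = q' * A1' * (q'' * A1'') by ring,
    show q' * q'' * (A2' * A2'') = q' * A2' * (q'' * A2'') by ring]
  rw [sum_range_crt hq'.ne' hq''.ne' hqq]
  case hf =>

    intro a b hab
    refine ite_congr (by rw [gcd_congr_mod hab]) (fun _ => ?_) (fun _ => rfl)
    refine Finset.sum_congr rfl fun x1 _ => ?_
    refine ite_congr rfl (fun _ => ?_) (fun _ => rfl)
    refine Finset.sum_congr rfl fun x2 _ => ?_
    refine ite_congr rfl (fun _ => ?_) (fun _ => rfl)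
    refine exp_congr (Nat.mul_ne_zero hq'.ne' hq''.ne') ?_
    have h : (a : ℤ) ≡ (b : ℤ) [ZMOD ((q' * q'' : ℕ) : ℤ)] := Int.natCast_modEq_iff.mpr hab
    exact ((h.mul_right _).add_right _).add_right _
  rw [Finset.sum_product]
  refine Finset.sum_congr rfl fun d' hd' => Finset.sum_congr rfl fun d'' hd'' => ?_
  dsimp only
  refine ite_congr rfl (fun _ => ?_) (fun _ => rfl)
  rw [sum_pi_crt (Nat.mul_ne_zero hq'.ne' hA1'.ne') (Nat.mul_ne_zero hq''.ne' hA1''.ne') hB1]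
  case hf =>

    intro x y hxy
    have hmod : ∀ i, (x i : ℤ) % ((A1' * A1'' : ℕ) : ℤ) = (y i : ℤ) % ((A1' * A1'' : ℕ) : ℤ) :=
      fun i => Int.natCast_modEq_iff.mpr
        (Nat.ModEq.of_dvd (mul_dvd_mul (dvd_mul_left A1' q') (dvd_mul_left A1'' q'')) (hxy i))
    simp only [hmod]
    refine ite_congr rfl (fun _ => ?_) (fun _ => rfl)
    refine Finset.sum_congr rfl fun x2 _ => ?_
    refine ite_congr rfl (fun _ => ?_) (fun _ => rfl)
    refine exp_congr (Nat.mul_ne_zero hq'.ne' hq''.ne') ?_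
    rw [← ZMod.intCast_eq_intCast_iff]
    have hz : ∀ i, ((x i : ℕ) : ZMod (q' * q'')) = ((y i : ℕ) : ZMod (q' * q'')) := fun i =>
      (ZMod.natCast_eq_natCast_iff _ _ _).mpr
        (Nat.ModEq.of_dvd (mul_dvd_mul (dvd_mul_right q' A1') (dvd_mul_right q'' A1'')) (hxy i))
    push_cast
    simp only [hz]
  rw [Finset.sum_product]
  refine Finset.sum_congr rfl fun y1 _ => Finset.sum_congr rfl fun z1 _ => ?_
  dsimp only
  refine ite_congr rfl (fun _ => ?_) (fun _ => rfl)
  rw [sum_pi_crt (Nat.mul_ne_zero hq'.ne' hA2'.ne') (Nat.mul_ne_zero hq''.ne' hA2''.ne') hB2]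
  case hf =>

    intro x y hxy
    have hmod : ∀ i, (x i : ℤ) % ((A2' * A2'' : ℕ) : ℤ) = (y i : ℤ) % ((A2' * A2'' : ℕ) : ℤ) :=
      fun i => Int.natCast_modEq_iff.mpr
        (Nat.ModEq.of_dvd (mul_dvd_mul (dvd_mul_left A2' q') (dvd_mul_left A2'' q'')) (hxy i))
    simp only [hmod]
    refine ite_congr rfl (fun _ => ?_) (fun _ => rfl)
    refine exp_congr (Nat.mul_ne_zero hq'.ne' hq''.ne') ?_
    rw [← ZMod.intCast_eq_intCast_iff]
    have hz : ∀ i, ((x i : ℕ) : ZMod (q' * q'')) = ((y i : ℕ) : ZMod (q' * q'')) := fun i =>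
      (ZMod.natCast_eq_natCast_iff _ _ _).mpr
        (Nat.ModEq.of_dvd (mul_dvd_mul (dvd_mul_right q' A2') (dvd_mul_right q'' A2'')) (hxy i))
    push_cast
    simp only [hz]
  rw [Finset.sum_product]

lemma rhs_eq (k1 k2 : ℕ) (M1 : Matrix (Fin k1) (Fin k1) ℤ)
    (M2 : Matrix (Fin k2) (Fin k2) ℤ) (l : ℤ)
    (q' q'' A1' A1'' A2' A2'' : ℕ) (hq' : 0 < q') (hq'' : 0 < q'')
    (a1 : Fin k1 → ℤ) (a2 : Fin k2 → ℤ) (c1 : Fin k1 → ℤ) (c2 : Fin k2 → ℤ)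
    (qb' qb'' : ℤ) (r' s' r'' s'' : ℕ)
    (hrs' : (r' * s') % q' = 1 % q') (hrs'' : (r'' * s'') % q'' = 1 % q'') :
    expSum k1 k2 M1 M2 l A1' A2' q' a1 a2 (fun i => qb'' * c1 i) (fun i => qb'' * c2 i)
      * expSum k1 k2 M1 M2 l A1'' A2'' q'' a1 a2 (fun i => qb' * c1 i) (fun i => qb' * c2 i)
      = bigR k1 k2 M1 M2 l q' q'' A1' A1'' A2' A2'' a1 a2 c1 c2 qb' qb'' r' r'' := by
  unfold expSum bigR
  simp only [Finset.sum_filter]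
  rw [sum_range_unit hq'.ne' hrs', sum_range_unit hq''.ne' hrs'']
  rw [Finset.sum_mul_sum]
  refine Finset.sum_congr rfl fun d' _ => Finset.sum_congr rfl fun d'' _ => ?_
  simp only [ite_mul, zero_mul]
  simp only [mul_ite, mul_zero]
  refine ite_congr rfl (fun _ => ?_) (fun _ => rfl)
  refine ite_congr rfl (fun _ => ?_) (fun _ => rfl)
  rw [Finset.sum_mul_sum]
  refine Finset.sum_congr rfl fun y1 _ => Finset.sum_congr rfl fun z1 _ => ?_
  simp only [ite_mul, zero_mul]
  simp only [mul_ite, mul_zero]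
  refine ite_congr rfl (fun _ => ?_) (fun _ => rfl)
  refine ite_congr rfl (fun _ => ?_) (fun _ => rfl)
  rw [Finset.sum_mul_sum]
  refine Finset.sum_congr rfl fun y2 _ => Finset.sum_congr rfl fun z2 _ => ?_
  simp only [ite_mul, zero_mul]
  simp only [mul_ite, mul_zero]

lemma ite_pair {α : Type*} {z A B : α} {P P1 P2 : Prop} [Decidable P] [Decidable P1]
    [Decidable P2] (h : P ↔ (P1 ∧ P2)) (hAB : P1 → P2 → A = B) :
    (if P then A else z) = if P1 then if P2 then B else z else z := by
  by_cases h1 : P1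
  · by_cases h2 : P2
    · rw [if_pos h1, if_pos h2, if_pos (h.mpr ⟨h1, h2⟩)]
      exact hAB h1 h2
    · rw [if_pos h1, if_neg h2, if_neg (fun hp => h2 (h.mp hp).2)]
  · rw [if_neg h1, if_neg (fun hp => h1 (h.mp hp).1)]

lemma big_eq (k1 k2 : ℕ) (M1 : Matrix (Fin k1) (Fin k1) ℤ)
    (M2 : Matrix (Fin k2) (Fin k2) ℤ) (l : ℤ)
    (q' q'' A1' A1'' A2' A2'' : ℕ) (hq' : 0 < q') (hq'' : 0 < q'')
    (a1 : Fin k1 → ℤ) (a2 : Fin k2 → ℤ) (c1 : Fin k1 → ℤ) (c2 : Fin k2 → ℤ)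
    (qb' qb'' : ℤ) (r' r'' : ℕ)
    (hqq : Nat.Coprime q' q'') (hB1 : Nat.Coprime (q' * A1') (q'' * A1''))
    (hB2 : Nat.Coprime (q' * A2') (q'' * A2''))
    (hqb' : qb' * (q' : ℤ) ≡ 1 [ZMOD (q'' : ℤ)])
    (hqb'' : qb'' * (q'' : ℤ) ≡ 1 [ZMOD (q' : ℤ)])
    (hr' : (r' : ℤ) ≡ qb'' [ZMOD (q' : ℤ)]) (hr'' : (r'' : ℤ) ≡ qb' [ZMOD (q'' : ℤ)])
    (hr'cop : Nat.Coprime r' q') (hr''cop : Nat.Coprime r'' q'') :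
    bigL k1 k2 M1 M2 l q' q'' A1' A1'' A2' A2'' a1 a2 c1 c2 hqq hB1 hB2
      = bigR k1 k2 M1 M2 l q' q'' A1' A1'' A2' A2'' a1 a2 c1 c2 qb' qb'' r' r'' := by
  have hA1c : Nat.Coprime A1' A1'' :=
    (hB1.coprime_dvd_left (dvd_mul_left A1' q')).coprime_dvd_right (dvd_mul_left A1'' q'')
  have hA2c : Nat.Coprime A2' A2'' :=
    (hB2.coprime_dvd_left (dvd_mul_left A2' q')).coprime_dvd_right (dvd_mul_left A2'' q'')
  have hsplit : ∀ {a b : ℤ}, a ≡ b [ZMOD (q' : ℤ)] → a ≡ b [ZMOD (q'' : ℤ)] →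
      a ≡ b [ZMOD ((q' * q'' : ℕ) : ℤ)] := by
    intro a b h1 h2
    have := (Int.modEq_and_modEq_iff_modEq_mul (by simpa using hqq)).mp ⟨h1, h2⟩
    rwa [← Nat.cast_mul] at this
  unfold bigL bigR
  refine Finset.sum_congr rfl fun d' hd' => Finset.sum_congr rfl fun d'' hd'' => ?_
  have L1 : Nat.gcd (crt q' q'' hqq d' d'') q' = Nat.gcd d' q' :=
    gcd_congr_mod (crt_mod_left q' q'' hqq d' d'')
  have L2 : Nat.gcd (crt q' q'' hqq d' d'') q'' = Nat.gcd d'' q'' :=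
    gcd_congr_mod (crt_mod_right q' q'' hqq d' d'')
  have R1 : Nat.gcd (r' * d' % q') q' = 1 ↔ Nat.gcd d' q' = 1 := by
    have h : Nat.gcd (r' * d' % q') q' = Nat.gcd (r' * d') q' :=
      gcd_congr_mod (Nat.mod_mod_of_dvd _ dvd_rfl)
    rw [h]
    exact Nat.coprime_mul_iff_left.trans (and_iff_right hr'cop)
  have R2 : Nat.gcd (r'' * d'' % q'') q'' = 1 ↔ Nat.gcd d'' q'' = 1 := by
    have h : Nat.gcd (r'' * d'' % q'') q'' = Nat.gcd (r'' * d'') q'' :=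
      gcd_congr_mod (Nat.mod_mod_of_dvd _ dvd_rfl)
    rw [h]
    exact Nat.coprime_mul_iff_left.trans (and_iff_right hr''cop)
  refine ite_pair ?_ fun hg1 hg2 => ?_
  · constructor
    · intro h
      have h' := Nat.coprime_mul_iff_right.mp h
      exact ⟨R1.mpr (L1 ▸ h'.1), R2.mpr (L2 ▸ h'.2)⟩
    · rintro ⟨ha, hb⟩
      exact Nat.coprime_mul_iff_right.mpr ⟨L1.trans (R1.mp ha), L2.trans (R2.mp hb)⟩
  refine Finset.sum_congr rfl fun y1 hy1 => Finset.sum_congr rfl fun z1 hz1 => ?_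
  refine ite_pair ?_ fun hc1' hc1'' => ?_
  · rw [← forall_and]
    refine forall_congr' fun i => ?_
    have hXy : (crt (q' * A1') (q'' * A1'') hB1 (y1 i) (z1 i) : ℤ) ≡ (y1 i : ℤ) [ZMOD (A1' : ℤ)] :=
      Int.natCast_modEq_iff.mpr
        (Nat.ModEq.of_dvd (dvd_mul_left A1' q') (crt_mod_left _ _ hB1 _ _))
    have hXz : (crt (q' * A1') (q'' * A1'') hB1 (y1 i) (z1 i) : ℤ) ≡ (z1 i : ℤ) [ZMOD (A1'' : ℤ)] :=
      Int.natCast_modEq_iff.mpr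
        (Nat.ModEq.of_dvd (dvd_mul_left A1'' q'') (crt_mod_right _ _ hB1 _ _))
    have hm : ((A1' * A1'' : ℕ) : ℤ) = (A1' : ℤ) * (A1'' : ℤ) := by push_cast; ring
    have hco : (A1' : ℤ).natAbs.Coprime (A1'' : ℤ).natAbs := by simpa using hA1c
    constructor
    · intro h
      have h' : (crt (q' * A1') (q'' * A1'') hB1 (y1 i) (z1 i) : ℤ) ≡ a1 i
          [ZMOD (A1' : ℤ) * (A1'' : ℤ)] := hm ▸ h
      have h2 := (Int.modEq_and_modEq_iff_modEq_mul hco).mpr h'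
      exact ⟨hXy.symm.trans h2.1, hXz.symm.trans h2.2⟩
    · rintro ⟨h2, h3⟩
      have h' := (Int.modEq_and_modEq_iff_modEq_mul hco).mp ⟨hXy.trans h2, hXz.trans h3⟩
      exact hm ▸ h'
  refine Finset.sum_congr rfl fun y2 hy2 => Finset.sum_congr rfl fun z2 hz2 => ?_
  refine ite_pair ?_ fun hc2' hc2'' => ?_
  · rw [← forall_and]
    refine forall_congr' fun i => ?_
    have hXy : (crt (q' * A2') (q'' * A2'') hB2 (y2 i) (z2 i) : ℤ) ≡ (y2 i : ℤ) [ZMOD (A2' : ℤ)] :=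
      Int.natCast_modEq_iff.mpr
        (Nat.ModEq.of_dvd (dvd_mul_left A2' q') (crt_mod_left _ _ hB2 _ _))
    have hXz : (crt (q' * A2') (q'' * A2'') hB2 (y2 i) (z2 i) : ℤ) ≡ (z2 i : ℤ) [ZMOD (A2'' : ℤ)] :=
      Int.natCast_modEq_iff.mpr
        (Nat.ModEq.of_dvd (dvd_mul_left A2'' q'') (crt_mod_right _ _ hB2 _ _))
    have hm : ((A2' * A2'' : ℕ) : ℤ) = (A2' : ℤ) * (A2'' : ℤ) := by push_cast; ring
    have hco : (A2' : ℤ).natAbs.Coprime (A2'' : ℤ).natAbs := by simpa using hA2c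
    constructor
    · intro h
      have h' : (crt (q' * A2') (q'' * A2'') hB2 (y2 i) (z2 i) : ℤ) ≡ a2 i
          [ZMOD (A2' : ℤ) * (A2'' : ℤ)] := hm ▸ h
      have h2 := (Int.modEq_and_modEq_iff_modEq_mul hco).mpr h'
      exact ⟨hXy.symm.trans h2.1, hXz.symm.trans h2.2⟩
    · rintro ⟨h2, h3⟩
      have h' := (Int.modEq_and_modEq_iff_modEq_mul hco).mp ⟨hXy.trans h2, hXz.trans h3⟩
      exact hm ▸ h'
  rw [exp_mul_combine hq'.ne' hq''.ne']
  refine exp_congr (Nat.mul_ne_zero hq'.ne' hq''.ne') (hsplit ?_ ?_)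
  · rw [← ZMod.intCast_eq_intCast_iff]
    push_cast
    have hD : ((crt q' q'' hqq d' d'' : ℕ) : ZMod q') = (d' : ZMod q') :=
      (ZMod.natCast_eq_natCast_iff _ _ _).mpr (crt_mod_left _ _ _ _ _)
    have hX1 : ∀ i, ((crt (q' * A1') (q'' * A1'') hB1 (y1 i) (z1 i) : ℕ) : ZMod q') = (y1 i : ZMod q') :=
      fun i => (ZMod.natCast_eq_natCast_iff _ _ _).mpr
        (Nat.ModEq.of_dvd (dvd_mul_right q' A1') (crt_mod_left _ _ _ _ _))
    have hX2 : ∀ i, ((crt (q' * A2') (q'' * A2'') hB2 (y2 i) (z2 i) : ℕ) : ZMod q') = (y2 i : ZMod q') :=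
      fun i => (ZMod.natCast_eq_natCast_iff _ _ _).mpr
        (Nat.ModEq.of_dvd (dvd_mul_right q' A2') (crt_mod_left _ _ _ _ _))
    have he' : ((r' * d' % q' : ℕ) : ZMod q') = ((qb'' : ℤ) : ZMod q') * (d' : ZMod q') := by
      rw [ZMod.natCast_mod, Nat.cast_mul]
      congr 1
      have := (ZMod.intCast_eq_intCast_iff _ _ _).mpr hr'
      simpa using this
    have hq''inv : ((qb'' : ℤ) : ZMod q') * ((q'' : ℕ) : ZMod q') = 1 := by
      have := (ZMod.intCast_eq_intCast_iff _ _ _).mpr hqb''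
      push_cast at this
      simpa using this
    have hr'z : ((r' : ℕ) : ZMod q') = ((qb'' : ℤ) : ZMod q') := by
      have := (ZMod.intCast_eq_intCast_iff _ _ _).mpr hr'
      simpa using this
    simp only [hD, hX1, hX2, ZMod.natCast_self, mul_zero, add_zero, zero_mul, hr'z]
    simp only [mul_assoc]
    simp only [← Finset.mul_sum]
    rw [show ∀ a b c d e : ZMod q', (a * b + a * c + a * d) * e = a * e * (b + c + d) from
      fun a b c d e => by ring]
    rw [hq''inv, one_mul]
  · rw [← ZMod.intCast_eq_intCast_iff]
    push_cast
    have hD : ((crt q' q'' hqq d' d'' : ℕ) : ZMod q'') = (d'' : ZMod q'') :=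
      (ZMod.natCast_eq_natCast_iff _ _ _).mpr (crt_mod_right _ _ _ _ _)
    have hX1 : ∀ i, ((crt (q' * A1') (q'' * A1'') hB1 (y1 i) (z1 i) : ℕ) : ZMod q'') = (z1 i : ZMod q'') :=
      fun i => (ZMod.natCast_eq_natCast_iff _ _ _).mpr
        (Nat.ModEq.of_dvd (dvd_mul_right q'' A1'') (crt_mod_right _ _ _ _ _))
    have hX2 : ∀ i, ((crt (q' * A2') (q'' * A2'') hB2 (y2 i) (z2 i) : ℕ) : ZMod q'') = (z2 i : ZMod q'') :=
      fun i => (ZMod.natCast_eq_natCast_iff _ _ _).mpr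
        (Nat.ModEq.of_dvd (dvd_mul_right q'' A2'') (crt_mod_right _ _ _ _ _))
    have hq'inv : ((qb' : ℤ) : ZMod q'') * ((q' : ℕ) : ZMod q'') = 1 := by
      have := (ZMod.intCast_eq_intCast_iff _ _ _).mpr hqb'
      push_cast at this
      simpa using this
    have hr''z : ((r'' : ℕ) : ZMod q'') = ((qb' : ℤ) : ZMod q'') := by
      have := (ZMod.intCast_eq_intCast_iff _ _ _).mpr hr''
      simpa using this
    simp only [hD, hX1, hX2, ZMod.natCast_self, mul_zero, add_zero, zero_mul, zero_add, hr''z]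
    simp only [mul_assoc]
    simp only [← Finset.mul_sum]
    rw [show ∀ a b c d e : ZMod q'', (a * b + a * c + a * d) * e = a * e * (b + c + d) from
      fun a b c d e => by ring]
    rw [hq'inv, one_mul]

/-- multiplicativity, Lemma 2.1: if `q = q'q''`, `A₁ = A₁'A₁''`, `A₂ = A₂'A₂''`
with `(A₁'q', A₁''q'') = (A₂'q', A₂''q'') = 1`, and `q̄'q' ≡ 1 (mod q'')`,
`q̄''q'' ≡ 1 (mod q')`, then `S_q(c) = S_{q'}(q̄''c) · S_{q''}(q̄'c)`. -/
theorem stmt_7 (k1 k2 : ℕ) (M1 : Matrix (Fin k1) (Fin k1) ℤ)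
    (M2 : Matrix (Fin k2) (Fin k2) ℤ) (l : ℤ)
    (q' q'' A1' A1'' A2' A2'' : ℕ) (hq' : 0 < q') (hq'' : 0 < q'')
    (hA1' : 0 < A1') (hA1'' : 0 < A1'') (hA2' : 0 < A2') (hA2'' : 0 < A2'')
    (h1 : Nat.Coprime (A1' * q') (A1'' * q'')) (h2 : Nat.Coprime (A2' * q') (A2'' * q''))
    (a1 : Fin k1 → ℤ) (a2 : Fin k2 → ℤ) (c1 : Fin k1 → ℤ) (c2 : Fin k2 → ℤ)
    (qb' qb'' : ℤ) (hqb' : qb' * (q' : ℤ) ≡ 1 [ZMOD (q'' : ℤ)])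
    (hqb'' : qb'' * (q'' : ℤ) ≡ 1 [ZMOD (q' : ℤ)]) :
    expSum k1 k2 M1 M2 l (A1' * A1'') (A2' * A2'') (q' * q'') a1 a2 c1 c2
      = expSum k1 k2 M1 M2 l A1' A2' q' a1 a2 (fun i => qb'' * c1 i) (fun i => qb'' * c2 i)
        * expSum k1 k2 M1 M2 l A1'' A2'' q'' a1 a2
            (fun i => qb' * c1 i) (fun i => qb' * c2 i) := by
  have hqq : Nat.Coprime q' q'' :=
    (h1.coprime_dvd_left (dvd_mul_left q' A1')).coprime_dvd_right (dvd_mul_left q'' A1'')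
  have hB1 : Nat.Coprime (q' * A1') (q'' * A1'') := by
    rw [Nat.mul_comm q' A1', Nat.mul_comm q'' A1'']; exact h1
  have hB2 : Nat.Coprime (q' * A2') (q'' * A2'') := by
    rw [Nat.mul_comm q' A2', Nat.mul_comm q'' A2'']; exact h2
  have hq'z : ((q' : ℤ)) ≠ 0 := by exact_mod_cast hq'.ne'
  have hq''z : ((q'' : ℤ)) ≠ 0 := by exact_mod_cast hq''.ne'
  set r' : ℕ := (qb'' % (q' : ℤ)).toNat with hr'def
  set s' : ℕ := q'' % q' with hs'def
  set r'' : ℕ := (qb' % (q'' : ℤ)).toNat with hr''def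
  set s'' : ℕ := q' % q'' with hs''def
  have hr'cast : ((r' : ℕ) : ℤ) = qb'' % (q' : ℤ) :=
    Int.toNat_of_nonneg (Int.emod_nonneg _ hq'z)
  have hr'int : ((r' : ℕ) : ℤ) ≡ qb'' [ZMOD (q' : ℤ)] := by
    rw [hr'cast]; exact Int.emod_emod_of_dvd _ dvd_rfl
  have hs'int : ((s' : ℕ) : ℤ) ≡ (q'' : ℤ) [ZMOD (q' : ℤ)] := by
    rw [hs'def]; push_cast; exact Int.emod_emod_of_dvd _ dvd_rfl
  have hrs' : (r' * s') % q' = 1 % q' := by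
    have hh : ((r' * s' : ℕ) : ℤ) ≡ ((1 : ℕ) : ℤ) [ZMOD (q' : ℤ)] := by
      push_cast
      calc ((r' : ℕ) : ℤ) * (s' : ℤ) ≡ qb'' * (q'' : ℤ) [ZMOD (q' : ℤ)] :=
            hr'int.mul hs'int
        _ ≡ 1 [ZMOD (q' : ℤ)] := hqb''
    exact Int.natCast_modEq_iff.mp hh
  have hr''cast : ((r'' : ℕ) : ℤ) = qb' % (q'' : ℤ) :=
    Int.toNat_of_nonneg (Int.emod_nonneg _ hq''z)
  have hr''int : ((r'' : ℕ) : ℤ) ≡ qb' [ZMOD (q'' : ℤ)] := by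
    rw [hr''cast]; exact Int.emod_emod_of_dvd _ dvd_rfl
  have hs''int : ((s'' : ℕ) : ℤ) ≡ (q' : ℤ) [ZMOD (q'' : ℤ)] := by
    rw [hs''def]; push_cast; exact Int.emod_emod_of_dvd _ dvd_rfl
  have hrs'' : (r'' * s'') % q'' = 1 % q'' := by
    have hh : ((r'' * s'' : ℕ) : ℤ) ≡ ((1 : ℕ) : ℤ) [ZMOD (q'' : ℤ)] := by
      push_cast
      calc ((r'' : ℕ) : ℤ) * (s'' : ℤ) ≡ qb' * (q' : ℤ) [ZMOD (q'' : ℤ)] :=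
            hr''int.mul hs''int
        _ ≡ 1 [ZMOD (q'' : ℤ)] := hqb'
    exact Int.natCast_modEq_iff.mp hh
  have hr'cop : Nat.Coprime r' q' := coprime_of_mul_mod hrs'
  have hr''cop : Nat.Coprime r'' q'' := coprime_of_mul_mod hrs''
  rw [lhs_eq k1 k2 M1 M2 l q' q'' A1' A1'' A2' A2'' hq' hq'' hA1' hA1'' hA2' hA2''
      a1 a2 c1 c2 hqq hB1 hB2,
    rhs_eq k1 k2 M1 M2 l q' q'' A1' A1'' A2' A2'' hq' hq'' a1 a2 c1 c2 qb' qb''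
      r' s' r'' s'' hrs' hrs'']
  exact big_eq k1 k2 M1 M2 l q' q'' A1' A1'' A2' A2'' hq' hq'' a1 a2 c1 c2 qb' qb''
    r' r'' hqq hB1 hB2 hqb' hqb'' hr'int hr''int hr'cop hr''cop
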